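/- Let A^I = [A̲, A̅] be an interval tensor in T_{m,n} with both A̲ and A̅ circulant. Then the following are equivalent: (a) A^I is an interval double B-tensor; (b) A^I is an interval B-tensor; (c) a̲_{1...1} > −Σ_{(i_2,...,i_m)≠(1,...,1)} a̲_{1 i_2...i_m}, and for all (j_2,...,j_m) ≠ (1,...,1), a̲_{1...1} − a̅_{1 j_2...j_m} > Σ_{(i_2,...,i_m)≠(1,...,1), (i_2,...,i_m)≠(j_2,...,j_m)} (a̅_{1 j_2...j_m} − a̲_{1 i_2...i_m}). -/

import Mathlib

open Finset

namespace TensorB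

abbrev Tensor (n m : ℕ) := Fin n → (Fin (m-1) → Fin n) → ℝ

/-- The diagonal index tuple `(i,...,i)`. -/
def diag {n m : ℕ} (i : Fin n) : Fin (m-1) → Fin n := fun _ => i

/-- Sum of the `i`-th row of `A`. -/
def rowSum {n m : ℕ} (A : Tensor n m) (i : Fin n) : ℝ :=
  ∑ j : Fin (m-1) → Fin n, A i j

/-- Off-diagonal index tuples of row `i`. -/
def offIdx (n m : ℕ) (i : Fin n) : Finset (Fin (m-1) → Fin n) :=
  Finset.univ.filter (fun j => j ≠ diag i)

/-- `γ_i^+(A) = max {0, off-diagonal entries of row i}`. -/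
def gammaPlus {n m : ℕ} (A : Tensor n m) (i : Fin n) : ℝ :=
  (offIdx n m i).fold max 0 (A i)

/-- B-tensor. -/
def IsBTensor {n m : ℕ} (A : Tensor n m) : Prop :=
  ∀ i : Fin n, 0 < rowSum A i ∧
    ∀ j, j ≠ diag i → A i j < (1 / (n : ℝ) ^ (m - 1)) * rowSum A i

/-- The deficiency sum `Σ_{(i_2,...,i_m)≠(i,...,i)} (γ_i^+(A) − a_{i i_2...i_m})`. -/
def defSum {n m : ℕ} (A : Tensor n m) (i : Fin n) : ℝ :=
  ∑ j ∈ offIdx n m i, (gammaPlus A i - A i j)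

/-- Double B-tensor. -/
def IsDoubleBTensor {n m : ℕ} (A : Tensor n m) : Prop :=
  ∀ i : Fin n,
    gammaPlus A i < A i (diag i) ∧
    defSum A i ≤ A i (diag i) - gammaPlus A i ∧
    ∀ j, j ≠ i →
      defSum A i * defSum A j <
        (A i (diag i) - gammaPlus A i) * (A j (diag j) - gammaPlus A j)

/-- Z-tensor: all off-diagonal entries nonpositive. -/
def IsZTensor {n m : ℕ} (A : Tensor n m) : Prop :=
  ∀ i : Fin n, ∀ j, j ≠ diag i → A i j ≤ 0

/-- Strictly diagonally dominant tensor. -/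
def IsSDD {n m : ℕ} (A : Tensor n m) : Prop :=
  ∀ i : Fin n, ∑ j ∈ offIdx n m i, |A i j| < A i (diag i)

/-- Circulant tensor. -/
def IsCirculant {n m : ℕ} [NeZero n] (A : Tensor n m) : Prop :=
  ∀ (i : Fin n) (j : Fin (m-1) → Fin n), A i j = A (i + 1) (fun l => j l + 1)

/-- Membership in the interval tensor `[L, U]`. -/
def Mem {n m : ℕ} (L U A : Tensor n m) : Prop :=
  ∀ i j, L i j ≤ A i j ∧ A i j ≤ U i j

/-- Entrywise `L ≤ U`, so that `[L,U]` is a genuine interval tensor. -/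
def IntervalValid {n m : ℕ} (L U : Tensor n m) : Prop :=
  ∀ i j, L i j ≤ U i j

set_option linter.unusedSectionVars false

section Aux
variable {n m : ℕ} [NeZero n]

variable {n m : ℕ} [NeZero n]

lemma mem_offIdx {i : Fin n} {j : Fin (m-1) → Fin n} : j ∈ offIdx n m i ↔ j ≠ diag i := by
  simp [offIdx]

lemma offIdx_eq_erase (i : Fin n) : offIdx n m i = Finset.univ.erase (diag i) :=
  Finset.filter_ne' _ _

lemma sum_split (i : Fin n) (f : (Fin (m-1) → Fin n) → ℝ) :
    ∑ j, f j = f (diag i) + ∑ j ∈ offIdx n m i, f j := by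
  rw [offIdx_eq_erase]
  exact (Finset.add_sum_erase _ f (mem_univ _)).symm

lemma off_split {i : Fin n} {jt : Fin (m-1) → Fin n} (h : jt ≠ diag i)
    (f : (Fin (m-1) → Fin n) → ℝ) :
    ∑ j ∈ offIdx n m i, f j = f jt + ∑ j ∈ (offIdx n m i).filter (fun j => j ≠ jt), f j := by
  rw [Finset.filter_ne']
  exact (Finset.add_sum_erase _ f (mem_offIdx.mpr h)).symm

lemma npos : (0:ℝ) < (n : ℝ) ^ (m-1) := by
  have : 0 < n := Nat.pos_of_ne_zero (NeZero.ne n)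
  positivity

lemma card_T : (Fintype.card (Fin (m-1) → Fin n) : ℝ) = (n:ℝ) ^ (m-1) := by
  simp [Fintype.card_fun]

lemma le_gammaPlus {A : Tensor n m} {i : Fin n} {j : Fin (m-1) → Fin n} (h : j ≠ diag i) :
    A i j ≤ gammaPlus A i :=
  ((Finset.fold_max_le _).mp le_rfl).2 j (mem_offIdx.mpr h)

lemma gammaPlus_nonneg (A : Tensor n m) (i : Fin n) : 0 ≤ gammaPlus A i :=
  ((Finset.fold_max_le _).mp le_rfl).1

lemma defSum_nonneg (A : Tensor n m) (i : Fin n) : 0 ≤ defSum A i :=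
  Finset.sum_nonneg fun j hj => sub_nonneg.mpr (le_gammaPlus (mem_offIdx.mp hj))




/-- Row-wise reformulation of the B-tensor condition. -/
def RowCond {n m : ℕ} (A : Tensor n m) (i : Fin n) : Prop :=
  0 < A i (diag i) + ∑ j ∈ offIdx n m i, A i j ∧
  ∀ jt, jt ≠ diag i →
    ∑ j ∈ (offIdx n m i).filter (fun j => j ≠ jt), (A i jt - A i j)
      < A i (diag i) - A i jt

lemma sum_const_T (c : ℝ) : ∑ _j : Fin (m-1) → Fin n, c = (n:ℝ) ^ (m-1) * c := by
  rw [Finset.sum_const, card_univ, nsmul_eq_mul, ← card_T]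

lemma isBTensor_iff_rowCond (A : Tensor n m) : IsBTensor A ↔ ∀ i, RowCond A i := by
  have hK : (0:ℝ) < (n:ℝ) ^ (m-1) := npos
  constructor
  · intro h i
    obtain ⟨h0, h1⟩ := h i
    have hrs : rowSum A i = A i (diag i) + ∑ j ∈ offIdx n m i, A i j := sum_split i _
    refine ⟨by rw [← hrs]; exact h0, fun jt hjt => ?_⟩
    have h2 := h1 jt hjt
    rw [one_div_mul_eq_div, lt_div_iff₀ hK] at h2
    have key : rowSum A i - A i jt * ((n:ℝ) ^ (m-1)) =
        (A i (diag i) - A i jt) -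
          ∑ j ∈ (offIdx n m i).filter (fun j => j ≠ jt), (A i jt - A i j) := by
      have e1 : rowSum A i - A i jt * ((n:ℝ) ^ (m-1)) =
          ∑ j : Fin (m-1) → Fin n, (A i j - A i jt) := by
        rw [Finset.sum_sub_distrib, sum_const_T]
        simp [rowSum]
        ring
      rw [e1, sum_split i (fun j => A i j - A i jt),
        off_split hjt (fun j => A i j - A i jt), Finset.sum_sub_distrib,
        Finset.sum_sub_distrib]
      ring
    linarith [key]
  · intro h i
    obtain ⟨h0, h1⟩ := h i
    have hrs : rowSum A i = A i (diag i) + ∑ j ∈ offIdx n m i, A i j := sum_split i _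
    refine ⟨by rw [hrs]; exact h0, fun jt hjt => ?_⟩
    have h2 := h1 jt hjt
    rw [one_div_mul_eq_div, lt_div_iff₀ hK]
    have key : rowSum A i - A i jt * ((n:ℝ) ^ (m-1)) =
        (A i (diag i) - A i jt) -
          ∑ j ∈ (offIdx n m i).filter (fun j => j ≠ jt), (A i jt - A i j) := by
      have e1 : rowSum A i - A i jt * ((n:ℝ) ^ (m-1)) =
          ∑ j : Fin (m-1) → Fin n, (A i j - A i jt) := by
        rw [Finset.sum_sub_distrib, sum_const_T]
        simp [rowSum]
        ring
      rw [e1, sum_split i (fun j => A i j - A i jt),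
        off_split hjt (fun j => A i j - A i jt), Finset.sum_sub_distrib,
        Finset.sum_sub_distrib]
      ring
    linarith [key]

lemma key_of_isBTensor {A : Tensor n m} (h : IsBTensor A) (i : Fin n) :
    defSum A i < A i (diag i) - gammaPlus A i := by
  have hK : (0:ℝ) < (n:ℝ) ^ (m-1) := npos
  obtain ⟨h0, h1⟩ := h i
  have hγ : gammaPlus A i < (1 / (n : ℝ) ^ (m - 1)) * rowSum A i :=
    (Finset.fold_max_lt _).mpr ⟨by positivity, fun j hj => h1 j (mem_offIdx.mp hj)⟩
  rw [one_div_mul_eq_div, lt_div_iff₀ hK] at hγ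
  have hcard : ((offIdx n m i).card : ℝ) + 1 = (n:ℝ) ^ (m-1) := by
    have h1 : (offIdx n m i).card + 1 = Fintype.card (Fin (m-1) → Fin n) := by
      rw [offIdx_eq_erase, ← card_univ]
      exact Finset.card_erase_add_one (mem_univ (diag i))
    rw [← card_T, ← h1]
    push_cast
    ring
  have hsum : defSum A i =
      ((offIdx n m i).card : ℝ) * gammaPlus A i - ∑ j ∈ offIdx n m i, A i j := by
    simp [defSum, Finset.sum_sub_distrib, Finset.sum_const, nsmul_eq_mul]
  have hrs : rowSum A i = A i (diag i) + ∑ j ∈ offIdx n m i, A i j := sum_split i _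
  nlinarith [hγ, hcard, hsum, hrs]

lemma isBTensor_isDoubleBTensor {A : Tensor n m} (h : IsBTensor A) : IsDoubleBTensor A := by
  intro i
  have d0 : 0 ≤ defSum A i := defSum_nonneg A i
  refine ⟨by linarith [key_of_isBTensor h i], (key_of_isBTensor h i).le,
    fun j _ => mul_lt_mul'' (key_of_isBTensor h i) (key_of_isBTensor h j) d0 (defSum_nonneg A j)⟩



/-- The shift bijection on index tuples. -/
def shiftE : (Fin (m-1) → Fin n) ≃ (Fin (m-1) → Fin n) where
  toFun j := fun l => j l + 1
  invFun j := fun l => j l - 1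
  left_inv j := by funext l; simp
  right_inv j := by funext l; simp

@[simp] lemma shiftE_apply (j : Fin (m-1) → Fin n) : shiftE j = fun l => j l + 1 := rfl

lemma shiftE_diag (i : Fin n) : shiftE (diag (n := n) (m := m) i) = diag (i + 1) := by
  funext l
  simp [shiftE, diag]

lemma circ_shift {A : Tensor n m} (hA : IsCirculant A) (i : Fin n)
    (j : Fin (m-1) → Fin n) : A i j = A (i + 1) (shiftE j) := hA i j

lemma offIdx_succ (i : Fin n) :
    offIdx n m (i + 1) = (offIdx n m i).map shiftE.toEmbedding := by
  ext j
  simp only [mem_offIdx, Finset.mem_map, Equiv.coe_toEmbedding]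
  constructor
  · intro hj
    refine ⟨shiftE.symm j, fun hc => hj ?_, shiftE.apply_symm_apply j⟩
    rw [← shiftE.apply_symm_apply j, hc, shiftE_diag]
  · rintro ⟨k, hk, rfl⟩ hc
    exact hk (shiftE.injective (by rw [hc, shiftE_diag]))

lemma sum_off_succ (i : Fin n) (f : (Fin (m-1) → Fin n) → ℝ) :
    ∑ j ∈ offIdx n m (i + 1), f j = ∑ j ∈ offIdx n m i, f (shiftE j) := by
  rw [offIdx_succ, Finset.sum_map]
  rfl

lemma filter_succ (i : Fin n) (jt : Fin (m-1) → Fin n) :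
    (offIdx n m (i + 1)).filter (fun j => j ≠ shiftE jt)
      = ((offIdx n m i).filter (fun j => j ≠ jt)).map shiftE.toEmbedding := by
  rw [offIdx_succ, Finset.filter_map]
  congr 1
  apply Finset.filter_congr
  intro j _
  simp only [Function.comp, Equiv.coe_toEmbedding]
  constructor
  · intro h1 h2; exact h1 (by rw [h2])
  · intro h1 h2; exact h1 (shiftE.injective h2)

lemma gamma_succ {A : Tensor n m} {i : Fin n}
    (h : ∀ j, A i j = A (i + 1) (shiftE j)) :
    gammaPlus A (i + 1) = gammaPlus A i := by
  unfold gammaPlus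
  rw [offIdx_succ, Finset.fold_map]
  exact Finset.fold_congr (fun j _ => (h j).symm)

lemma defSum_succ {A : Tensor n m} {i : Fin n}
    (h : ∀ j, A i j = A (i + 1) (shiftE j)) :
    defSum A (i + 1) = defSum A i := by
  unfold defSum
  rw [gamma_succ h, sum_off_succ]
  exact Finset.sum_congr rfl (fun j _ => by rw [← h j])

lemma diagEntry_succ {A : Tensor n m} {i : Fin n}
    (h : ∀ j, A i j = A (i + 1) (shiftE j)) :
    A (i + 1) (diag (i + 1)) = A i (diag i) := by
  rw [← shiftE_diag, ← h (diag i)]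




/-- The row-`i` interval condition. -/
def Cond {n m : ℕ} (L U : Tensor n m) (i : Fin n) : Prop :=
  ((-∑ j ∈ offIdx n m i, L i j) < L i (diag i)) ∧
  ∀ jt, jt ≠ diag i →
    ∑ j ∈ (offIdx n m i).filter (fun j => j ≠ jt), (U i jt - L i j) <
      L i (diag i) - U i jt

lemma cond_succ {L U : Tensor n m} (hcL : IsCirculant L) (hcU : IsCirculant U)
    {i : Fin n} (h : Cond L U i) : Cond L U (i + 1) := by
  obtain ⟨h1, h2⟩ := h
  constructor
  · rw [sum_off_succ, diagEntry_succ (circ_shift hcL i)]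
    have e : ∑ j ∈ offIdx n m i, L (i+1) (shiftE j) = ∑ j ∈ offIdx n m i, L i j :=
      Finset.sum_congr rfl fun j _ => (circ_shift hcL i j).symm
    rw [e]; exact h1
  · intro jt' hjt'
    have hjt'eq : jt' = shiftE (shiftE.symm jt') := (shiftE.apply_symm_apply jt').symm
    set jt := shiftE.symm jt' with hjt_def
    have hjtne : jt ≠ diag i := by
      intro hc
      exact hjt' (by rw [hjt'eq, hc, shiftE_diag])
    have h2' := h2 jt hjtne
    rw [hjt'eq, filter_succ, Finset.sum_map]
    have eU : U (i+1) (shiftE jt) = U i jt := (circ_shift hcU i jt).symm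
    have eD : L (i+1) (diag (i+1)) = L i (diag i) := diagEntry_succ (circ_shift hcL i)
    have eS : ∑ j ∈ (offIdx n m i).filter (fun j => j ≠ jt),
        (U (i+1) (shiftE jt) - L (i+1) (shiftE.toEmbedding j))
        = ∑ j ∈ (offIdx n m i).filter (fun j => j ≠ jt), (U i jt - L i j) := by
      refine Finset.sum_congr rfl fun j _ => ?_
      rw [eU]
      have : L (i+1) (shiftE.toEmbedding j) = L i j := (circ_shift hcL i j).symm
      rw [this]
    rw [eS, eU, eD]
    exact h2'

open Fin.NatCast in
lemma cond_all {L U : Tensor n m} (hcL : IsCirculant L) (hcU : IsCirculant U)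
    (h0 : Cond L U 0) : ∀ i, Cond L U i := by
  have hk : ∀ k : ℕ, Cond L U (k : Fin n) := by
    intro k
    induction k with
    | zero => simpa using h0
    | succ k ih =>
      have e : ((k+1 : ℕ) : Fin n) = (k : Fin n) + 1 := by push_cast; ring
      rw [e]
      exact cond_succ hcL hcU ih
  intro i
  have := hk i.val
  rwa [Fin.cast_val_eq_self] at this

lemma cond_to_B {L U : Tensor n m} (hcL : IsCirculant L) (hcU : IsCirculant U)
    (h : Cond L U 0) : ∀ A, Mem L U A → IsBTensor A := by
  intro A hA
  rw [isBTensor_iff_rowCond]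
  intro i
  obtain ⟨c1, c2⟩ := cond_all hcL hcU h i
  constructor
  · have hs : ∑ j ∈ offIdx n m i, L i j ≤ ∑ j ∈ offIdx n m i, A i j :=
      Finset.sum_le_sum fun j _ => (hA i j).1
    have hd : L i (diag i) ≤ A i (diag i) := (hA i (diag i)).1
    linarith
  · intro jt hjt
    have hs : ∑ j ∈ (offIdx n m i).filter (fun j => j ≠ jt), (A i jt - A i j)
        ≤ ∑ j ∈ (offIdx n m i).filter (fun j => j ≠ jt), (U i jt - L i j) :=
      Finset.sum_le_sum fun j _ => sub_le_sub (hA i jt).2 (hA i j).1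
    have h1 : L i (diag i) ≤ A i (diag i) := (hA i (diag i)).1
    have h2 : A i jt ≤ U i jt := (hA i jt).2
    have h3 := c2 jt hjt
    linarith

lemma B_to_cond {L U : Tensor n m} (hLU : IntervalValid L U)
    (h : ∀ A, Mem L U A → IsBTensor A) : Cond L U 0 := by
  classical
  have memL : Mem L U L := fun i j => ⟨le_rfl, hLU i j⟩
  constructor
  · have := ((isBTensor_iff_rowCond L).mp (h L memL) 0).1
    linarith
  · intro jt hjt
    set Astar : Tensor n m := fun i j => if i = 0 ∧ j = jt then U i j else L i j with hAdef
    have memA : Mem L U Astar := by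
      intro i j
      by_cases hc : i = 0 ∧ j = jt
      · simp only [hAdef, if_pos hc]
        exact ⟨hLU i j, le_rfl⟩
      · simp only [hAdef, if_neg hc]
        exact ⟨le_rfl, hLU i j⟩
    have rc := ((isBTensor_iff_rowCond Astar).mp (h Astar memA) 0).2 jt hjt
    have e1 : Astar 0 jt = U 0 jt := by simp [hAdef]
    have e2 : Astar 0 (diag 0) = L 0 (diag 0) := by
      have : ¬((0:Fin n) = 0 ∧ diag 0 = jt) := fun hc => hjt hc.2.symm
      simp only [hAdef, if_neg this]
    have e3 : ∑ j ∈ (offIdx n m 0).filter (fun j => j ≠ jt), (Astar 0 jt - Astar 0 j)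
        = ∑ j ∈ (offIdx n m 0).filter (fun j => j ≠ jt), (U 0 jt - L 0 j) := by
      refine Finset.sum_congr rfl fun j hj => ?_
      have hjne : j ≠ jt := (Finset.mem_filter.mp hj).2
      have : ¬((0:Fin n) = 0 ∧ j = jt) := fun hc => hjne hc.2
      rw [e1]
      simp only [hAdef, if_neg this]
    rw [e3, e2, e1] at rc
    exact rc


lemma fin_one_ne_zero_of_off {i : Fin n} {j : Fin (m-1) → Fin n} (h : j ≠ diag i) :
    (1 : Fin n) ≠ 0 := by
  intro h10
  have hn1 : n = 1 := Fin.one_eq_zero_iff.mp h10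
  apply h
  funext l
  subst hn1
  exact Subsingleton.elim _ _

lemma D_to_cond {L U : Tensor n m} (hLU : IntervalValid L U) (hcL : IsCirculant L)
    (hcU : IsCirculant U) (h : ∀ A, Mem L U A → IsDoubleBTensor A) : Cond L U 0 := by
  classical
  have memL : Mem L U L := fun i j => ⟨le_rfl, hLU i j⟩
  have dL := h L memL
  constructor
  · by_cases hoff : offIdx n m (0:Fin n) = ∅
    · have hγ : gammaPlus L (0:Fin n) = 0 := by
        unfold gammaPlus; rw [hoff, Finset.fold_empty]
      have h1 := (dL 0).1
      rw [hγ] at h1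
      rw [hoff]
      simpa using h1
    · obtain ⟨j0, hj0⟩ := Finset.nonempty_of_ne_empty hoff
      have hn : (1:Fin n) ≠ 0 := fin_one_ne_zero_of_off (mem_offIdx.mp hj0)
      have hpair := (dL 0).2.2 1 hn
      have hshift : ∀ j, L 0 j = L (0+1) (shiftE j) := circ_shift hcL 0
      have hA1 : (0:Fin n) + 1 = 1 := zero_add 1
      rw [← hA1] at hpair
      rw [gamma_succ hshift, defSum_succ hshift, diagEntry_succ hshift] at hpair
      have hd0 : 0 ≤ defSum L 0 := defSum_nonneg L 0
      have hγlt := (dL 0).1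
      have hkey : defSum L 0 < L 0 (diag 0) - gammaPlus L 0 := by nlinarith
      have hγ0 : 0 ≤ gammaPlus L 0 := gammaPlus_nonneg L 0
      have hsum : -∑ j ∈ offIdx n m 0, L 0 j ≤ defSum L 0 := by
        have hle : ∑ j ∈ offIdx n m 0, (0 - L 0 j)
            ≤ ∑ j ∈ offIdx n m 0, (gammaPlus L 0 - L 0 j) :=
          Finset.sum_le_sum fun j _ => by linarith
        unfold defSum
        simpa [Finset.sum_sub_distrib] using hle
      linarith
  · intro jt hjt
    have hn : (1:Fin n) ≠ 0 := fin_one_ne_zero_of_off hjt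
    have hA1 : (0:Fin n) + 1 = 1 := zero_add 1
    have hU1 : U 1 (shiftE jt) = U 0 jt := by
      rw [← hA1, ← circ_shift hcU 0 jt]
    set Astar : Tensor n m := fun i j =>
      if i = 0 ∧ j = jt then U 0 jt else
        if i = 1 ∧ j = shiftE jt then U 0 jt else L i j with hAdef
    have memA : Mem L U Astar := by
      intro i j
      by_cases hc1 : i = 0 ∧ j = jt
      · have e : Astar i j = U 0 jt := by simp [hAdef, hc1.1, hc1.2]
        rw [e, hc1.1, hc1.2]
        exact ⟨hLU 0 jt, le_rfl⟩
      · by_cases hc2 : i = 1 ∧ j = shiftE jt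
        · have e : Astar i j = U 0 jt := by simp [hAdef, hc2.1, hc2.2, hn]
          rw [e, hc2.1, hc2.2]
          exact ⟨le_of_le_of_eq (hLU 1 (shiftE jt)) hU1, le_of_eq hU1.symm⟩
        · have e : Astar i j = L i j := by
            simp only [hAdef]
            rw [if_neg hc1, if_neg hc2]
          rw [e]
          exact ⟨le_rfl, hLU i j⟩
    have dA := h Astar memA
    have hshift : ∀ j, Astar 0 j = Astar (0+1) (shiftE j) := by
      intro j
      rw [hA1]
      by_cases hj : j = jt
      · have l1 : Astar 0 j = U 0 jt := by simp [hAdef, hj]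
        have l2 : Astar 1 (shiftE j) = U 0 jt := by simp [hAdef, hj, hn]
        rw [l1, l2]
      · have hsj : shiftE j ≠ shiftE jt := fun hc => hj (shiftE.injective hc)
        have l1 : Astar 0 j = L 0 j := by simp [hAdef, hj, Ne.symm hn]
        have l2 : Astar 1 (shiftE j) = L 1 (shiftE j) := by
          simp only [hAdef, shiftE_apply]
          rw [if_neg, if_neg]
          · exact fun hc => absurd (shiftE.injective (funext (fun l => congrFun hc.2 l))) hj
          · exact fun hc => hn hc.1
        rw [l1, l2, ← hA1, ← circ_shift hcL 0 j]
    have hpair := (dA 0).2.2 1 hn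
    rw [← hA1] at hpair
    rw [gamma_succ hshift, defSum_succ hshift, diagEntry_succ hshift] at hpair
    have hd0 : 0 ≤ defSum Astar 0 := defSum_nonneg _ 0
    have hγlt := (dA 0).1
    have hkey : defSum Astar 0 < Astar 0 (diag 0) - gammaPlus Astar 0 := by nlinarith
    have ajt : Astar 0 jt = U 0 jt := by simp [hAdef]
    have adiag : Astar 0 (diag 0) = L 0 (diag 0) := by
      simp [hAdef, Ne.symm hjt, Ne.symm hn]
    have γjt : U 0 jt ≤ gammaPlus Astar 0 := by
      rw [← ajt]; exact le_gammaPlus hjt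
    have dsplit : defSum Astar 0 = (gammaPlus Astar 0 - Astar 0 jt) +
        ∑ j ∈ (offIdx n m 0).filter (fun j => j ≠ jt), (gammaPlus Astar 0 - Astar 0 j) :=
      off_split hjt _
    have sumle : ∑ j ∈ (offIdx n m 0).filter (fun j => j ≠ jt), (U 0 jt - L 0 j)
        ≤ ∑ j ∈ (offIdx n m 0).filter (fun j => j ≠ jt), (gammaPlus Astar 0 - Astar 0 j) := by
      refine Finset.sum_le_sum fun j hj => ?_
      have hjne : j ≠ jt := (Finset.mem_filter.mp hj).2
      have aj : Astar 0 j = L 0 j := by simp [hAdef, hjne, Ne.symm hn]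
      rw [aj]
      exact sub_le_sub γjt le_rfl
    rw [ajt] at dsplit
    linarith

end Aux

theorem stmt17 {n m : ℕ} [NeZero n] (L U : Tensor n m) (hLU : IntervalValid L U)
    (hcL : IsCirculant L) (hcU : IsCirculant U) :
    ((∀ A, Mem L U A → IsDoubleBTensor A) ↔ (∀ A, Mem L U A → IsBTensor A)) ∧
    ((∀ A, Mem L U A → IsBTensor A) ↔
      ((-∑ j ∈ offIdx n m 0, L 0 j) < L 0 (diag 0) ∧
        ∀ jt, jt ≠ diag (0 : Fin n) →
          ∑ j ∈ (offIdx n m 0).filter (fun j => j ≠ jt), (U 0 jt - L 0 j) <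
            L 0 (diag 0) - U 0 jt)) := by
  constructor
  · constructor
    · intro hD
      exact cond_to_B hcL hcU (D_to_cond hLU hcL hcU hD)
    · intro hB A hA
      exact isBTensor_isDoubleBTensor (hB A hA)
  · constructor
    · intro hB
      exact B_to_cond hLU hB
    · intro hC
      exact cond_to_B hcL hcU hC

end TensorB
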